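/- arXiv:2405.14901 — 2 statements merged into one kernel-verified Lean document; each statement's English description precedes it below -/
import Mathlib

section
/- Let α ≥ 1, β ≥ α+1, p > 0 and t ∈ (0,1). Then ₁F₁(α; β; −p/(t(1−t))) ≤ λ_{α−1,β−α−1}/(4 p B(α,β−α)). -/
open Real MeasureTheory

/-- Classical Euler beta function `B(x,y) = ∫₀¹ t^(x-1) (1-t)^(y-1) dt`. -/
noncomputable def eulerBeta (x y : ℝ) : ℝ :=
  ∫ t in (0:ℝ)..1, t ^ (x - 1) * (1 - t) ^ (y - 1)

/-- `λ_{x,y} = x^x y^y / (x+y)^(x+y)`; the convention `0^0 = 1` is automatic for `rpow`. -/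
noncomputable def lam (x y : ℝ) : ℝ := x ^ x * y ^ y / (x + y) ^ (x + y)

/-- Pochhammer symbol `(x)_n = x (x+1) ⋯ (x+n-1)`. -/
noncomputable def poch (x : ℝ) (n : ℕ) : ℝ := ∏ k ∈ Finset.range n, (x + k)

/-- Confluent hypergeometric (Kummer) function `₁F₁(b;c;z)`. -/
noncomputable def oneF1 (b c z : ℝ) : ℝ :=
  ∑' n : ℕ, poch b n / poch c n * z ^ n / (Nat.factorial n : ℝ)


lemma aux_ofReal (x y : ℝ) {s : ℝ} (h0 : 0 ≤ s) (h1 : s ≤ 1) :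
    ((s ^ (x - 1) * (1 - s) ^ (y - 1) : ℝ) : ℂ)
      = (s : ℂ) ^ ((x : ℂ) - 1) * (1 - (s : ℂ)) ^ ((y : ℂ) - 1) := by
  rw [Complex.ofReal_mul, Complex.ofReal_cpow h0, Complex.ofReal_cpow (by linarith)]
  push_cast
  ring_nf

lemma eulerBeta_eq_Gamma {x y : ℝ} (hx : 0 < x) (hy : 0 < y) :
    eulerBeta x y = Real.Gamma x * Real.Gamma y / Real.Gamma (x + y) := by
  have hB : Complex.betaIntegral x y = ((eulerBeta x y : ℝ) : ℂ) := by
    rw [eulerBeta, ← intervalIntegral.integral_ofReal]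
    refine intervalIntegral.integral_congr fun s hs => ?_
    rw [Set.uIcc_of_le zero_le_one] at hs
    exact (aux_ofReal x y hs.1 hs.2).symm
  have h := Complex.Gamma_mul_Gamma_eq_betaIntegral (s := (x:ℂ)) (t := (y:ℂ))
    (by simpa using hx) (by simpa using hy)
  rw [hB, ← Complex.ofReal_add, Complex.Gamma_ofReal, Complex.Gamma_ofReal,
    Complex.Gamma_ofReal, ← Complex.ofReal_mul, ← Complex.ofReal_mul,
    Complex.ofReal_inj] at h
  have hne : Real.Gamma (x + y) ≠ 0 := (Real.Gamma_pos_of_pos (by linarith)).ne'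
  field_simp
  linarith [h]

lemma eulerBeta_pos {x y : ℝ} (hx : 0 < x) (hy : 0 < y) : 0 < eulerBeta x y := by
  rw [eulerBeta_eq_Gamma hx hy]
  have := Real.Gamma_pos_of_pos hx
  have := Real.Gamma_pos_of_pos hy
  have := Real.Gamma_pos_of_pos (show 0 < x + y by linarith)
  positivity

lemma betaIntegrableOn {x y : ℝ} (hx : 0 < x) (hy : 0 < y) :
    IntegrableOn (fun s : ℝ => s ^ (x - 1) * (1 - s) ^ (y - 1)) (Set.Ioc 0 1) := by
  have hc := Complex.betaIntegral_convergent (u := (x:ℂ)) (v := (y:ℂ))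
    (by simpa using hx) (by simpa using hy)
  rw [intervalIntegrable_iff, Set.uIoc_of_le zero_le_one] at hc
  have h2 : IntegrableOn (fun s : ℝ => Complex.re ((s:ℂ) ^ ((x:ℂ) - 1) * (1 - (s:ℂ)) ^ ((y:ℂ) - 1))) (Set.Ioc 0 1) := hc.re
  refine IntegrableOn.congr_fun h2 (fun s hs => ?_) measurableSet_Ioc
  rw [← aux_ofReal x y hs.1.le hs.2]
  simp

lemma poch_pos {x : ℝ} (hx : 0 < x) (n : ℕ) : 0 < poch x n :=
  Finset.prod_pos fun k _ => by positivity

lemma Gamma_add_nat {x : ℝ} (hx : 0 < x) (n : ℕ) :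
    Real.Gamma (x + n) = poch x n * Real.Gamma x := by
  induction n with
  | zero => simp [poch]
  | succ n ih =>
    have hxn : (0:ℝ) < x + n := by positivity
    have : x + (n+1 : ℕ) = (x + n) + 1 := by push_cast; ring
    rw [this, Real.Gamma_add_one hxn.ne', ih]
    simp only [poch, Finset.prod_range_succ]
    ring

lemma beta_ratio {b y : ℝ} (hb : 0 < b) (hy : 0 < y) (n : ℕ) :
    Real.Gamma (b + n) * Real.Gamma y / Real.Gamma (b + n + y)
      = poch b n / poch (b + y) n * (Real.Gamma b * Real.Gamma y / Real.Gamma (b + y)) := by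
  have h1 := Gamma_add_nat hb n
  have h2 := Gamma_add_nat (show (0:ℝ) < b + y by linarith) n
  have e : b + n + y = b + y + n := by ring
  rw [e, h1, h2]
  have g1 : Real.Gamma b ≠ 0 := (Real.Gamma_pos_of_pos hb).ne'
  have g2 : Real.Gamma (b+y) ≠ 0 := (Real.Gamma_pos_of_pos (by linarith)).ne'
  have p2 : poch (b+y) n ≠ 0 := (poch_pos (by linarith) n).ne'
  field_simp

lemma lam_nonneg {x y : ℝ} (hx : 0 ≤ x) (hy : 0 ≤ y) : 0 ≤ lam x y := by
  unfold lam; positivity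

lemma rpow_mul_rpow_le_lam {x y s : ℝ} (hx : 0 ≤ x) (hy : 0 ≤ y) (h0 : 0 ≤ s) (h1 : s ≤ 1) :
    s ^ x * (1 - s) ^ y ≤ lam x y := by
  have h1' : 0 ≤ (1:ℝ) - s := by linarith
  rcases eq_or_lt_of_le hx with hx0 | hx0
  · -- x = 0
    have hl : lam 0 y = 1 := by
      unfold lam
      rcases eq_or_lt_of_le hy with hy0 | hy0
      · rw [← hy0]; norm_num
      · rw [Real.rpow_zero, zero_add, one_mul, div_self (Real.rpow_pos_of_pos hy0 y).ne']
    rw [← hx0, hl, Real.rpow_zero, one_mul]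
    exact Real.rpow_le_one h1' (by linarith) hy
  rcases eq_or_lt_of_le hy with hy0 | hy0
  · -- y = 0
    have hl : lam x 0 = 1 := by
      unfold lam
      rw [Real.rpow_zero, add_zero, mul_one, div_self (Real.rpow_pos_of_pos hx0 x).ne']
    rw [← hy0, hl, Real.rpow_zero, mul_one]
    exact Real.rpow_le_one h0 h1 hx
  -- x, y > 0
  have hxy : (0:ℝ) < x + y := by linarith
  set A : ℝ := s * (x + y) / x with hA
  set B : ℝ := (1 - s) * (x + y) / y with hBdef
  have hA0 : 0 ≤ A := by positivity
  have hB0 : 0 ≤ B := by positivity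
  have hw : x / (x + y) + y / (x + y) = 1 := by field_simp
  have key := Real.geom_mean_le_arith_mean2_weighted
    (by positivity) (by positivity) hA0 hB0 hw
  have hr : x / (x + y) * A + y / (x + y) * B = 1 := by
    rw [hA, hBdef]; field_simp; ring
  rw [hr] at key
  -- raise to power (x+y)
  have key2 : (A ^ (x / (x+y)) * B ^ (y / (x+y))) ^ (x + y) ≤ 1 := by
    calc (A ^ (x / (x+y)) * B ^ (y / (x+y))) ^ (x + y)
        ≤ 1 ^ (x + y) := Real.rpow_le_rpow (by positivity) key hxy.le
      _ = 1 := Real.one_rpow _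
  have hexp : (A ^ (x / (x+y)) * B ^ (y / (x+y))) ^ (x + y) = A ^ x * B ^ y := by
    rw [Real.mul_rpow (Real.rpow_nonneg hA0 _) (Real.rpow_nonneg hB0 _),
      ← Real.rpow_mul hA0, ← Real.rpow_mul hB0,
      div_mul_cancel₀ x hxy.ne', div_mul_cancel₀ y hxy.ne']
  rw [hexp] at key2
  have hAx : A ^ x = s ^ x * (x + y) ^ x / x ^ x := by
    rw [hA, Real.div_rpow (by positivity) hx0.le, Real.mul_rpow h0 hxy.le]
  have hBy : B ^ y = (1 - s) ^ y * (x + y) ^ y / y ^ y := by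
    rw [hBdef, Real.div_rpow (by positivity) hy0.le, Real.mul_rpow h1' hxy.le]
  have hxx : (0:ℝ) < x ^ x := Real.rpow_pos_of_pos hx0 x
  have hyy : (0:ℝ) < y ^ y := Real.rpow_pos_of_pos hy0 y
  have h4 : (x + y) ^ (x + y) = (x + y) ^ x * (x + y) ^ y := Real.rpow_add hxy x y
  rw [lam, le_div_iff₀ (by positivity : (0:ℝ) < (x + y) ^ (x + y))]
  calc s ^ x * (1 - s) ^ y * (x + y) ^ (x + y)
      = (A ^ x * B ^ y) * (x ^ x * y ^ y) := by
        rw [hAx, hBy, h4]; field_simp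
    _ ≤ 1 * (x ^ x * y ^ y) := mul_le_mul_of_nonneg_right key2 (by positivity)
    _ = x ^ x * y ^ y := one_mul _

lemma eulerBeta_Ioc (x y : ℝ) :
    eulerBeta x y = ∫ s in Set.Ioc (0:ℝ) 1, s ^ (x - 1) * (1 - s) ^ (y - 1) := by
  rw [eulerBeta, intervalIntegral.integral_of_le zero_le_one]

lemma eulerBeta_shift {b y : ℝ} (hb : 0 < b) (hy : 0 < y) (n : ℕ) :
    eulerBeta (b + n) y = poch b n / poch (b + y) n * eulerBeta b y := by
  rw [eulerBeta_eq_Gamma (by positivity) hy, eulerBeta_eq_Gamma hb hy]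
  exact beta_ratio hb hy n

lemma oneF1_rep {b y z : ℝ} (hb : 0 < b) (hy : 0 < y) :
    oneF1 b (b + y) z =
      (∫ s in Set.Ioc (0:ℝ) 1, s ^ (b - 1) * (1 - s) ^ (y - 1) * Real.exp (z * s))
        / eulerBeta b y := by
  set μ := volume.restrict (Set.Ioc (0:ℝ) 1) with hμ
  set F : ℕ → ℝ → ℝ :=
    fun n s => s ^ (b - 1) * (1 - s) ^ (y - 1) * ((z * s) ^ n / (Nat.factorial n : ℝ)) with hF
  have hEq : ∀ n : ℕ, ∀ s ∈ Set.Ioc (0:ℝ) 1,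
      F n s = z ^ n / (Nat.factorial n : ℝ) * (s ^ (b + n - 1) * (1 - s) ^ (y - 1)) := by
    intro n s hs
    have hpow : s ^ (b - 1) * (s : ℝ) ^ (n : ℕ) = s ^ (b + n - 1) := by
      rw [← Real.rpow_natCast s n, ← Real.rpow_add hs.1]
      ring_nf
    simp only [hF, mul_pow]
    rw [← hpow]
    ring
  have hbetaInt : ∀ n : ℕ,
      IntegrableOn (fun s : ℝ => s ^ (b + n - 1) * (1 - s) ^ (y - 1)) (Set.Ioc 0 1) := by
    intro n
    have := betaIntegrableOn (x := b + n) (by positivity) hy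
    simpa using this
  have hInt : ∀ n : ℕ, Integrable (F n) μ := by
    intro n
    exact IntegrableOn.congr_fun ((hbetaInt n).const_mul (z ^ n / (Nat.factorial n : ℝ)))
      (fun s hs => (hEq n s hs).symm) measurableSet_Ioc
  have hB0 : eulerBeta b y = ∫ s in Set.Ioc (0:ℝ) 1, s ^ (b - 1) * (1 - s) ^ (y - 1) :=
    eulerBeta_Ioc b y
  have hnormval : ∀ n : ℕ, ∫ s, ‖F n s‖ ∂μ ≤
      |z| ^ n / (Nat.factorial n : ℝ) * eulerBeta b y := by
    intro n
    have hmono : ∀ s ∈ Set.Ioc (0:ℝ) 1, ‖F n s‖ ≤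
        |z| ^ n / (Nat.factorial n : ℝ) * (s ^ (b - 1) * (1 - s) ^ (y - 1)) := by
      intro s hs
      have hs0 : (0:ℝ) ≤ s := hs.1.le
      have hs1 : (0:ℝ) ≤ 1 - s := by linarith [hs.2]
      have hr1 : (0:ℝ) ≤ s ^ (b - 1) := Real.rpow_nonneg hs0 _
      have hr2 : (0:ℝ) ≤ (1 - s) ^ (y - 1) := Real.rpow_nonneg hs1 _
      have : ‖F n s‖ = s ^ (b - 1) * (1 - s) ^ (y - 1) * (|z * s| ^ n / (Nat.factorial n : ℝ)) := by
        simp only [hF, Real.norm_eq_abs, abs_mul, abs_div, abs_pow,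
          abs_of_nonneg hr1, abs_of_nonneg hr2, Nat.abs_cast]
      rw [this]
      have hzs : |z * s| ^ n ≤ |z| ^ n := by
        apply pow_le_pow_left₀ (abs_nonneg _)
        rw [abs_mul]
        calc |z| * |s| ≤ |z| * 1 := by
              apply mul_le_mul_of_nonneg_left _ (abs_nonneg z)
              rw [abs_of_nonneg hs0]; exact hs.2
          _ = |z| := mul_one _
      calc s ^ (b-1) * (1-s) ^ (y-1) * (|z * s| ^ n / (Nat.factorial n : ℝ))
          ≤ s ^ (b-1) * (1-s) ^ (y-1) * (|z| ^ n / (Nat.factorial n : ℝ)) := by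
            apply mul_le_mul_of_nonneg_left _ (by positivity)
            exact div_le_div_of_nonneg_right hzs (by positivity)
        _ = |z| ^ n / (Nat.factorial n : ℝ) * (s ^ (b-1) * (1-s) ^ (y-1)) := by ring
    calc ∫ s, ‖F n s‖ ∂μ
        ≤ ∫ s in Set.Ioc (0:ℝ) 1,
            |z| ^ n / (Nat.factorial n : ℝ) * (s ^ (b - 1) * (1 - s) ^ (y - 1)) := by
          apply setIntegral_mono_on (hInt n).norm
            ((betaIntegrableOn hb hy).const_mul _) measurableSet_Ioc hmono
      _ = |z| ^ n / (Nat.factorial n : ℝ) * eulerBeta b y := by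
          rw [integral_const_mul _ _, ← hB0]
  have hsum : Summable fun n : ℕ => ∫ s, ‖F n s‖ ∂μ := by
    apply Summable.of_nonneg_of_le (fun n => integral_nonneg fun s => norm_nonneg _) hnormval
    exact (Real.summable_pow_div_factorial |z|).mul_right (eulerBeta b y)
  have hHasSum := hasSum_integral_of_summable_integral_norm hInt hsum
  have hts : (fun s : ℝ => ∑' n : ℕ, F n s) =
      fun s => s ^ (b - 1) * (1 - s) ^ (y - 1) * Real.exp (z * s) := by
    funext s
    have he : Real.exp (z * s) = ∑' n : ℕ, (z * s) ^ n / (Nat.factorial n : ℝ) := by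
      rw [Real.exp_eq_exp_ℝ, NormedSpace.exp_eq_tsum_div]
    rw [he, ← tsum_mul_left]
  rw [hts] at hHasSum
  have hval : ∀ n : ℕ, ∫ s, F n s ∂μ =
      poch b n / poch (b + y) n * z ^ n / (Nat.factorial n : ℝ) * eulerBeta b y := by
    intro n
    rw [setIntegral_congr_fun measurableSet_Ioc (hEq n), integral_const_mul _ _,
      ← eulerBeta_Ioc (b + n) y, eulerBeta_shift hb hy n]
    ring
  have hBne : eulerBeta b y ≠ 0 := (eulerBeta_pos hb hy).ne'
  have hfinal : HasSum (fun n : ℕ => poch b n / poch (b + y) n * z ^ n / (Nat.factorial n : ℝ))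
      ((∫ s in Set.Ioc (0:ℝ) 1, s ^ (b-1) * (1-s) ^ (y-1) * Real.exp (z * s)) / eulerBeta b y) := by
    have := hHasSum.div_const (eulerBeta b y)
    convert this using 1
    · rfl
    funext n
    rw [hval n, mul_div_cancel_right₀ _ hBne]
  rw [oneF1]
  exact hfinal.tsum_eq

theorem stmt2 (α β p t : ℝ) (hα : 1 ≤ α) (hβ : α + 1 ≤ β) (hp : 0 < p)
    (ht : t ∈ Set.Ioo (0:ℝ) 1) :
    oneF1 α β (-p / (t * (1 - t))) ≤
      lam (α - 1) (β - α - 1) / (4 * p * eulerBeta α (β - α)) := by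
  obtain ⟨ht0, ht1⟩ := ht
  set z : ℝ := -p / (t * (1 - t)) with hzdef
  have htt : 0 < t * (1 - t) := by nlinarith
  have hz : z < 0 := by
    rw [hzdef]; apply div_neg_of_neg_of_pos (by linarith) htt
  have hα' : (0:ℝ) < α := by linarith
  have hy : (0:ℝ) < β - α := by linarith
  have hB : 0 < eulerBeta α (β - α) := eulerBeta_pos hα' hy
  have hrep := oneF1_rep (b := α) (y := β - α) (z := z) hα' hy
  rw [show α + (β - α) = β by ring] at hrep
  rw [hrep]
  set L : ℝ := lam (α - 1) (β - α - 1) with hL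
  have hL0 : 0 ≤ L := lam_nonneg (by linarith) (by linarith)
  -- integrability of LHS integrand
  have hGint : IntegrableOn
      (fun s : ℝ => s ^ (α - 1) * (1 - s) ^ (β - α - 1) * Real.exp (z * s))
      (Set.Ioc 0 1) := by
    have hbd : Integrable
        (fun s : ℝ => Real.exp (z * s) * (s ^ (α - 1) * (1 - s) ^ (β - α - 1)))
        (volume.restrict (Set.Ioc (0:ℝ) 1)) := by
      apply Integrable.bdd_mul (c := 1) (betaIntegrableOn hα' hy)
        ((Real.continuous_exp.comp (continuous_const.mul continuous_id)).aestronglyMeasurable)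
      rw [ae_restrict_iff' measurableSet_Ioc]
      refine ae_of_all _ fun s hs => ?_
      simp only [Function.comp_apply, Pi.mul_apply, id_eq, Real.norm_eq_abs, abs_of_pos (Real.exp_pos _)]
      exact Real.exp_le_one_iff.mpr (by have h1 := mul_nonpos_of_nonpos_of_nonneg hz.le hs.1.le; have h2 := h1; rw [hzdef] at h2; linarith)
    exact IntegrableOn.congr_fun hbd (fun s _ => by ring) measurableSet_Ioc
  -- integrability of RHS integrand
  have hRint : IntegrableOn (fun s : ℝ => L * Real.exp (z * s)) (Set.Ioc 0 1) := by
    have : IntervalIntegrable (fun s : ℝ => L * Real.exp (z * s)) volume 0 1 :=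
      (continuous_const.mul
        (Real.continuous_exp.comp (continuous_const.mul continuous_id))).intervalIntegrable 0 1
    rwa [intervalIntegrable_iff, Set.uIoc_of_le zero_le_one] at this
  -- pointwise bound
  have hmono : ∀ s ∈ Set.Ioc (0:ℝ) 1,
      s ^ (α - 1) * (1 - s) ^ (β - α - 1) * Real.exp (z * s) ≤ L * Real.exp (z * s) := by
    intro s hs
    have h := rpow_mul_rpow_le_lam (x := α - 1) (y := β - α - 1)
      (by linarith) (by linarith) hs.1.le hs.2
    exact mul_le_mul_of_nonneg_right h (Real.exp_pos _).le
  have hIle : (∫ s in Set.Ioc (0:ℝ) 1, s ^ (α - 1) * (1 - s) ^ (β - α - 1) * Real.exp (z * s))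
      ≤ L * (1 / (4 * p)) := by
    have step1 := setIntegral_mono_on hGint hRint measurableSet_Ioc hmono
    have hexpint : (∫ s in Set.Ioc (0:ℝ) 1, Real.exp (z * s)) = (Real.exp z - 1) / z := by
      rw [← intervalIntegral.integral_of_le zero_le_one]
      have h := intervalIntegral.integral_comp_mul_left (a := (0:ℝ)) (b := 1)
        (f := Real.exp) hz.ne
      simp only [mul_zero, mul_one, integral_exp, Real.exp_zero, smul_eq_mul] at h
      rw [h]; ring
    have step2 : (∫ s in Set.Ioc (0:ℝ) 1, L * Real.exp (z * s)) ≤ L * (1 / (4 * p)) := by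
      rw [integral_const_mul, hexpint]
      apply mul_le_mul_of_nonneg_left _ hL0
      have h1 : (Real.exp z - 1) / z = (1 - Real.exp z) / (-z) := by
        rw [div_eq_div_iff hz.ne (by linarith : (-z) ≠ 0)]; ring
      rw [h1]
      have hnz : (0:ℝ) < -z := by linarith
      have h2 : (1 - Real.exp z) / (-z) ≤ 1 / (-z) := by
        apply div_le_div_of_nonneg_right ?_ hnz.le
        linarith [Real.exp_pos z]
      have h3 : 1 / (-z) = t * (1 - t) / p := by
        rw [hzdef]; field_simp
      have h4 : t * (1 - t) / p ≤ 1 / (4 * p) := by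
        rw [div_le_div_iff₀ hp (by positivity)]
        nlinarith [mul_nonneg (sq_nonneg (2*t-1)) hp.le]
      calc (1 - Real.exp z) / (-z) ≤ 1 / (-z) := h2
        _ = t * (1 - t) / p := h3
        _ ≤ 1 / (4 * p) := h4
    linarith
  calc (∫ s in Set.Ioc (0:ℝ) 1, s ^ (α-1) * (1-s) ^ (β-α-1) * Real.exp (z * s)) / eulerBeta α (β-α)
      ≤ L * (1 / (4 * p)) / eulerBeta α (β - α) := by gcongr
    _ = L / (4 * p * eulerBeta α (β - α)) := by
        field_simp
end

section
/- Let 0 < b < c, 0 ≤ z₁ ≤ 1, 0 ≤ z₂ ≤ 1 and z₃ ≥ 0. Then |₁F₁(b;c;z₁z₂z₃) − e^{(z₂−1)z₃} ₁F₁(b;c;z₁z₃)| ≤ (1/4) e^{z₃}. -/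
open Real MeasureTheory

open Finset in
private lemma esum_conv (u v : ℝ) (hu : 0 ≤ u) (hv : 0 ≤ v) (N : ℕ) :
    ∑ n ∈ range N, (u + v) ^ n / n.factorial ≤
      (∑ i ∈ range N, u ^ i / i.factorial) * (∑ j ∈ range N, v ^ j / j.factorial) := by
  have key : ∀ n : ℕ, (u + v) ^ n / (n.factorial : ℝ)
      = ∑ ij ∈ Finset.HasAntidiagonal.antidiagonal n,
          (u ^ ij.1 / ij.1.factorial) * (v ^ ij.2 / ij.2.factorial) := by
    intro n
    rw [Finset.Nat.sum_antidiagonal_eq_sum_range_succ_mk, add_pow, Finset.sum_div]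
    refine Finset.sum_congr rfl fun k hk => ?_
    have hkn : k ≤ n := Nat.lt_succ_iff.mp (mem_range.mp hk)
    have hfact : (n.choose k : ℝ) * k.factorial * (n - k).factorial = n.factorial := by
      exact_mod_cast congrArg (Nat.cast : ℕ → ℝ)
        (Nat.choose_mul_factorial_mul_factorial hkn)
    have h1 : (k.factorial : ℝ) ≠ 0 := Nat.cast_ne_zero.mpr k.factorial_ne_zero
    have h2 : ((n - k).factorial : ℝ) ≠ 0 := Nat.cast_ne_zero.mpr (n - k).factorial_ne_zero
    have h3 : (n.factorial : ℝ) ≠ 0 := Nat.cast_ne_zero.mpr n.factorial_ne_zero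
    field_simp
    rw [← hfact]; ring
  have hdisj : (↑(range N) : Set ℕ).PairwiseDisjoint Finset.HasAntidiagonal.antidiagonal := by
    intro m _ n _ hmn
    simp only [Finset.disjoint_left, Finset.HasAntidiagonal.mem_antidiagonal]
    intro p hp hq
    exact hmn (by omega)
  calc ∑ n ∈ range N, (u + v) ^ n / (n.factorial : ℝ)
      = ∑ p ∈ (range N).biUnion Finset.HasAntidiagonal.antidiagonal,
          (u ^ p.1 / p.1.factorial) * (v ^ p.2 / p.2.factorial) := by
        rw [Finset.sum_biUnion hdisj]
        exact Finset.sum_congr rfl fun n _ => key n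
    _ ≤ ∑ p ∈ range N ×ˢ range N,
          (u ^ p.1 / p.1.factorial) * (v ^ p.2 / p.2.factorial) := by
        refine Finset.sum_le_sum_of_subset_of_nonneg ?_ fun p _ _ => by positivity
        intro p hp
        simp only [Finset.mem_biUnion, Finset.mem_range,
          Finset.HasAntidiagonal.mem_antidiagonal, Finset.mem_product] at hp ⊢
        obtain ⟨n, hn, h⟩ := hp
        constructor <;> omega
    _ = _ := by rw [Finset.sum_mul_sum, Finset.sum_product]

open Finset in
private lemma esum_le (x y : ℝ) (hy : 0 ≤ y) (hyx : y ≤ x) (N : ℕ) :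
    ∑ n ∈ range N, x ^ n / n.factorial ≤
      (∑ i ∈ range N, y ^ i / i.factorial) * Real.exp (x - y) := by
  have h := esum_conv y (x - y) hy (by linarith) N
  rw [add_sub_cancel] at h
  refine h.trans ?_
  have h0 : 0 ≤ ∑ i ∈ range N, y ^ i / (i.factorial : ℝ) := by positivity
  exact mul_le_mul_of_nonneg_left (Real.sum_le_exp_of_nonneg (by linarith) N) h0

private lemma quarter (a z : ℝ) : Real.exp a - Real.exp (2 * a - z) ≤ 1 / 4 * Real.exp z := by
  have h1 : Real.exp a = Real.exp z * Real.exp (a - z) := by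
    rw [← Real.exp_add]; ring_nf
  have h2 : Real.exp (2 * a - z) = Real.exp z * (Real.exp (a - z)) ^ 2 := by
    rw [sq, ← Real.exp_add, ← Real.exp_add]; ring_nf
  nlinarith [sq_nonneg (Real.exp (a - z) - 1 / 2), Real.exp_pos z]

open Finset in
private lemma abel_bound (r g : ℕ → ℝ) (M : ℝ) (hr0 : r 0 ≤ 1) (hrpos : ∀ n, 0 ≤ r n)
    (hrstep : ∀ n, r (n + 1) ≤ r n)
    (hS0 : ∀ k, 0 ≤ ∑ i ∈ range k, g i) (hSM : ∀ k, (∑ i ∈ range k, g i) ≤ M) (N : ℕ) :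
    0 ≤ (∑ i ∈ range N, r i * g i) ∧ (∑ i ∈ range N, r i * g i) ≤ M := by
  have hM : 0 ≤ M := by simpa using hSM 0
  rcases N with _ | n
  · simpa using hM
  have hby := Finset.sum_range_by_parts r g (n + 1)
  simp only [smul_eq_mul, Nat.add_sub_cancel] at hby
  have hby' : ∑ i ∈ range (n + 1), r i * g i
      = r n * (∑ i ∈ range (n + 1), g i)
        + ∑ i ∈ range n, (r i - r (i + 1)) * (∑ j ∈ range (i + 1), g j) := by
    rw [hby, sub_eq_add_neg, ← Finset.sum_neg_distrib]
    congr 1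
    exact Finset.sum_congr rfl fun i _ => by ring
  constructor
  · rw [hby']
    have h1 : 0 ≤ r n * (∑ i ∈ range (n + 1), g i) :=
      mul_nonneg (hrpos n) (hS0 _)
    have h2 : 0 ≤ ∑ i ∈ range n, (r i - r (i + 1)) * (∑ j ∈ range (i + 1), g j) :=
      Finset.sum_nonneg fun i _ => mul_nonneg (by linarith [hrstep i]) (hS0 _)
    linarith
  · rw [hby']
    have h1 : r n * (∑ i ∈ range (n + 1), g i) ≤ r n * M :=
      mul_le_mul_of_nonneg_left (hSM _) (hrpos n)
    have h2 : ∑ i ∈ range n, (r i - r (i + 1)) * (∑ j ∈ range (i + 1), g j)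
        ≤ ∑ i ∈ range n, (r i - r (i + 1)) * M :=
      Finset.sum_le_sum fun i _ =>
        mul_le_mul_of_nonneg_left (hSM _) (by linarith [hrstep i])
    have h3 : ∑ i ∈ range n, (r i - r (i + 1)) * M = (r 0 - r n) * M := by
      rw [← Finset.sum_mul, Finset.sum_range_sub']
    nlinarith [hrpos n]

private lemma poch_succ (t : ℝ) (n : ℕ) : poch t (n + 1) = poch t n * (t + n) :=
  Finset.prod_range_succ _ _

theorem stmt17 (b c z₁ z₂ z₃ : ℝ) (hb : 0 < b) (hbc : b < c)
    (hz₁ : z₁ ∈ Set.Icc (0:ℝ) 1) (hz₂ : z₂ ∈ Set.Icc (0:ℝ) 1) (hz₃ : 0 ≤ z₃) :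
    |oneF1 b c (z₁ * z₂ * z₃) - Real.exp ((z₂ - 1) * z₃) * oneF1 b c (z₁ * z₃)| ≤
      1 / 4 * Real.exp z₃ := by
  obtain ⟨hz₁0, hz₁1⟩ := hz₁
  obtain ⟨hz₂0, hz₂1⟩ := hz₂
  set M : ℝ := 1 / 4 * Real.exp z₃ with hM
  set x : ℝ := z₁ * z₃ with hx
  set y : ℝ := z₁ * z₂ * z₃ with hy
  have hy0 : 0 ≤ y := by positivity
  have hx0 : 0 ≤ x := by positivity
  have hyx : y ≤ x := by rw [hx, hy]; nlinarith
  have hxz : x ≤ z₃ := by rw [hx]; nlinarith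
  set E : ℝ := Real.exp ((z₂ - 1) * z₃) with hE
  have hE0 : 0 < E := Real.exp_pos _
  have hE1 : E ≤ 1 := by
    rw [hE]
    exact Real.exp_le_one_iff.mpr (by nlinarith)
  set g : ℕ → ℝ := fun n => y ^ n / n.factorial - E * (x ^ n / n.factorial) with hg
  have hsplit : ∀ k, ∑ i ∈ Finset.range k, g i
      = (∑ i ∈ Finset.range k, y ^ i / i.factorial)
        - E * (∑ i ∈ Finset.range k, x ^ i / i.factorial) := by
    intro k
    rw [Finset.mul_sum, ← Finset.sum_sub_distrib]
  have hS0 : ∀ k, 0 ≤ ∑ i ∈ Finset.range k, g i := by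
    intro k
    rw [hsplit]
    have h1 : E ≤ Real.exp (y - x) := by
      rw [hE]
      refine Real.exp_le_exp.mpr ?_
      have : y - x = (z₂ - 1) * x := by rw [hx, hy]; ring
      rw [this]
      exact mul_le_mul_of_nonpos_left hxz (by linarith)
    have h2 := esum_le x y hy0 hyx k
    have h3 : 0 ≤ ∑ i ∈ Finset.range k, x ^ i / (i.factorial : ℝ) := by positivity
    have h4 : Real.exp (y - x) * Real.exp (x - y) = 1 := by
      rw [← Real.exp_add]
      simp
    have s1 : E * (∑ i ∈ Finset.range k, x ^ i / (i.factorial : ℝ))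
        ≤ Real.exp (y - x) * (∑ i ∈ Finset.range k, x ^ i / (i.factorial : ℝ)) :=
      mul_le_mul_of_nonneg_right h1 h3
    have s2 : Real.exp (y - x) * (∑ i ∈ Finset.range k, x ^ i / (i.factorial : ℝ))
        ≤ Real.exp (y - x) * ((∑ i ∈ Finset.range k, y ^ i / (i.factorial : ℝ))
            * Real.exp (x - y)) :=
      mul_le_mul_of_nonneg_left h2 (Real.exp_pos _).le
    have s3 : Real.exp (y - x) * ((∑ i ∈ Finset.range k, y ^ i / (i.factorial : ℝ))
        * Real.exp (x - y)) = ∑ i ∈ Finset.range k, y ^ i / (i.factorial : ℝ) := by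
      rw [mul_comm (∑ i ∈ Finset.range k, y ^ i / (i.factorial : ℝ)), ← mul_assoc, h4,
        one_mul]
    linarith
  have hSM : ∀ k, (∑ i ∈ Finset.range k, g i) ≤ M := by
    intro k
    rw [hsplit]
    have hterm : (∑ i ∈ Finset.range k, y ^ i / (i.factorial : ℝ))
        ≤ ∑ i ∈ Finset.range k, x ^ i / (i.factorial : ℝ) := by
      refine Finset.sum_le_sum fun i _ => ?_
      gcongr
    have h5 : E * (∑ i ∈ Finset.range k, y ^ i / (i.factorial : ℝ))
        ≤ E * (∑ i ∈ Finset.range k, x ^ i / (i.factorial : ℝ)) :=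
      mul_le_mul_of_nonneg_left hterm hE0.le
    have h6 : (∑ i ∈ Finset.range k, y ^ i / (i.factorial : ℝ)) ≤ Real.exp y :=
      Real.sum_le_exp_of_nonneg hy0 k
    have h7 : (0:ℝ) ≤ 1 - E := by linarith
    have hSy0 : 0 ≤ ∑ i ∈ Finset.range k, y ^ i / (i.factorial : ℝ) := by positivity
    have h8 : Real.exp y ≤ Real.exp (z₂ * z₃) :=
      Real.exp_le_exp.mpr (by rw [hy]; nlinarith)
    have h9 : (1 - E) * Real.exp (z₂ * z₃)
        = Real.exp (z₂ * z₃) - Real.exp (2 * (z₂ * z₃) - z₃) := by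
      rw [sub_mul, one_mul, hE, ← Real.exp_add]
      ring_nf
    have h10 := quarter (z₂ * z₃) z₃
    nlinarith [mul_le_mul_of_nonneg_left h6 h7, mul_le_mul_of_nonneg_left h8 h7]
  set r : ℕ → ℝ := fun n => poch b n / poch c n with hr
  have hc0 : 0 < c := hb.trans hbc
  have hpoch : ∀ t : ℝ, 0 < t → ∀ n, 0 < poch t n := by
    intro t ht n
    exact Finset.prod_pos fun k _ => by positivity
  have hrpos : ∀ n, 0 ≤ r n := fun n =>
    div_nonneg (hpoch b hb n).le (hpoch c hc0 n).le
  have hr0 : r 0 ≤ 1 := by simp [hr, poch]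
  have hrstep : ∀ n, r (n + 1) ≤ r n := by
    intro n
    have h1 := hpoch b hb n
    have h2 := hpoch c hc0 n
    have hn : (0:ℝ) ≤ (n : ℝ) := Nat.cast_nonneg n
    simp only [hr, poch_succ]
    rw [div_le_div_iff₀ (by positivity) h2]
    nlinarith [mul_le_mul_of_nonneg_left (show b + (n:ℝ) ≤ c + n by linarith)
      (mul_nonneg h1.le h2.le)]
  have hr1 : ∀ n, r n ≤ 1 := by
    intro n
    induction n with
    | zero => exact hr0
    | succ n ih => exact (hrstep n).trans ih
  have hsum : ∀ w : ℝ, 0 ≤ w →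
      Summable (fun n => poch b n / poch c n * w ^ n / (Nat.factorial n : ℝ)) := by
    intro w hw
    refine Summable.of_nonneg_of_le (fun n => ?_) (fun n => ?_)
      (Real.summable_pow_div_factorial w)
    · exact div_nonneg (mul_nonneg (div_nonneg (hpoch b hb n).le (hpoch c hc0 n).le)
        (pow_nonneg hw n)) (Nat.cast_nonneg _)
    have hle : poch b n / poch c n * w ^ n / (Nat.factorial n : ℝ)
        ≤ 1 * w ^ n / (Nat.factorial n : ℝ) := by
      gcongr
      exact hr1 n
    simpa using hle
  have hA := (hsum y hy0).hasSum
  have hB := (hsum x hx0).hasSum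
  have hT : HasSum (fun n => r n * g n) (oneF1 b c y - E * oneF1 b c x) := by
    have h := hA.sub (hB.mul_left E)
    have heq : (fun n => poch b n / poch c n * y ^ n / (Nat.factorial n : ℝ)
        - E * (poch b n / poch c n * x ^ n / (Nat.factorial n : ℝ)))
        = fun n => r n * g n := by
      funext n
      simp only [hr, hg]
      ring
    rw [heq] at h
    simpa only [oneF1] using h
  have habel := fun N => abel_bound r g M hr0 hrpos hrstep hS0 hSM N
  have htend := hT.tendsto_sum_nat
  have hlow : 0 ≤ oneF1 b c y - E * oneF1 b c x :=
    ge_of_tendsto' htend fun N => (habel N).1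
  have hup : oneF1 b c y - E * oneF1 b c x ≤ M :=
    le_of_tendsto' htend fun N => (habel N).2
  rw [abs_of_nonneg hlow]
  exact hup
end
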